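/- arXiv:1707.05857 — 3 statements merged into one kernel-verified Lean document; each statement's English description precedes it below -/
import Mathlib

section
/- If X ~ ESEP(θ, σ, ε, α) with r a positive even integer, then E[(X−θ)^r] = 2^{r/2} σ^r Γ((r+1)/α) [(1+ε)^{r+1} + (1−ε)^{r+1}] / (2 Γ(1/α)). -/
open Real MeasureTheory Set

set_option maxHeartbeats 1000000

/-- The ESEP density. -/
noncomputable def esepPDF (θ σ ε α : ℝ) (x : ℝ) : ℝ :=
  if x < θ then
    α / (2 * Real.sqrt 2 * σ * Real.Gamma (1 / α)) *
      Real.exp (-(((θ - x) / (Real.sqrt 2 * (1 + ε) * σ)) ^ α))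
  else
    α / (2 * Real.sqrt 2 * σ * Real.Gamma (1 / α)) *
      Real.exp (-(((x - θ) / (Real.sqrt 2 * (1 - ε) * σ)) ^ α))


private lemma esep_aux_integrable {p : ℝ} (hp : 0 < p) (n : ℕ) :
    IntegrableOn (fun x : ℝ => x ^ n * Real.exp (-(x ^ p))) (Ioi 0) := by
  have hp' : p ≠ 0 := hp.ne'
  have hs : (0:ℝ) < ((n:ℝ) + 1) / p := by positivity
  have h1 := Real.GammaIntegral_convergent hs
  have h2 : IntegrableOn (fun x : ℝ => (|p| * x ^ (p - 1)) •
      (Real.exp (-(x ^ p)) * (x ^ p) ^ (((n:ℝ) + 1) / p - 1))) (Ioi 0) :=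
    (integrableOn_Ioi_comp_rpow_iff (fun y : ℝ => Real.exp (-y) * y ^ (((n:ℝ) + 1) / p - 1)) hp').2 h1
  have h3 := h2.const_mul p⁻¹
  refine IntegrableOn.congr_fun h3 ?_ measurableSet_Ioi
  intro x hx
  have hx0 : (0:ℝ) < x := hx
  have key : x ^ (p - 1) * x ^ (p * (((n:ℝ) + 1) / p - 1)) = x ^ n := by
    rw [← Real.rpow_add hx0, ← Real.rpow_natCast x n]
    congr 1
    field_simp
    ring
  simp only [smul_eq_mul, abs_of_pos hp, ← Real.rpow_mul hx0.le]
  calc p⁻¹ * (p * x ^ (p - 1) * (Real.exp (-(x ^ p)) * x ^ (p * (((n:ℝ) + 1) / p - 1))))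
      = (x ^ (p - 1) * x ^ (p * (((n:ℝ) + 1) / p - 1))) * Real.exp (-(x ^ p)) * (p⁻¹ * p) := by
        ring
    _ = x ^ n * Real.exp (-(x ^ p)) := by rw [key, inv_mul_cancel₀ hp', mul_one]

private lemma esep_aux_integrable' {p m : ℝ} (hp : 0 < p) (hm : 0 < m) (n : ℕ) :
    IntegrableOn (fun x : ℝ => x ^ n * Real.exp (-((x / m) ^ p))) (Ioi 0) := by
  have h0 := esep_aux_integrable hp n
  have h1 : IntegrableOn (fun x : ℝ => (m⁻¹ * x) ^ n * Real.exp (-((m⁻¹ * x) ^ p)))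
      (Ioi 0) := by
    have := (integrableOn_Ioi_comp_mul_left_iff
      (fun x : ℝ => x ^ n * Real.exp (-(x ^ p))) 0 (inv_pos.2 hm)).2
    rw [mul_zero] at this
    exact this h0
  have h2 := h1.const_mul (m ^ n)
  refine IntegrableOn.congr_fun h2 ?_ measurableSet_Ioi
  intro x hx
  have h3 : m⁻¹ * x = x / m := by field_simp
  simp only [h3, div_pow]
  field_simp

private lemma esep_aux_integral {p m : ℝ} (hp : 0 < p) (hm : 0 < m) (n : ℕ) :
    ∫ x in Ioi (0:ℝ), x ^ n * Real.exp (-((x / m) ^ p)) =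
      m ^ (n + 1) * ((1 / p) * Real.Gamma (((n:ℝ) + 1) / p)) := by
  have hp' : p ≠ 0 := hp.ne'
  have hb : (0:ℝ) < (m ^ p)⁻¹ := by positivity
  have hq : (-1:ℝ) < (n:ℝ) := by
    have := Nat.cast_nonneg (α := ℝ) n; linarith
  have hcong : ∀ x ∈ Ioi (0:ℝ), x ^ n * Real.exp (-((x / m) ^ p)) =
      x ^ ((n:ℝ)) * Real.exp (-(m ^ p)⁻¹ * x ^ p) := by
    intro x hx
    rw [Real.rpow_natCast]
    congr 1
    rw [Real.div_rpow (le_of_lt hx) hm.le]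
    field_simp
  rw [setIntegral_congr_fun measurableSet_Ioi hcong,
    integral_rpow_mul_exp_neg_mul_rpow hp hq hb]
  have hsc : ((m ^ p)⁻¹ : ℝ) ^ (-((n:ℝ) + 1) / p) = m ^ (n + 1) := by
    rw [← Real.rpow_neg hm.le, ← Real.rpow_mul hm.le,
      show (-p) * (-((n:ℝ) + 1) / p) = (n:ℝ) + 1 by field_simp,
      show ((n:ℝ) + 1) = ((n + 1 : ℕ) : ℝ) by push_cast; ring, Real.rpow_natCast]
  rw [hsc, mul_assoc]

theorem esep_central_moment (θ σ ε α : ℝ) (hσ : 0 < σ) (hε : ε ∈ Set.Ioo (-1 : ℝ) 1)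
    (hα : 0 < α) (r : ℕ) (hr : 0 < r) (hre : Even r) :
    ∫ x : ℝ, (x - θ) ^ r * esepPDF θ σ ε α x =
      (2 : ℝ) ^ ((r : ℝ) / 2) * σ ^ r * Real.Gamma (((r : ℝ) + 1) / α) *
        ((1 + ε) ^ (r + 1) + (1 - ε) ^ (r + 1)) / (2 * Real.Gamma (1 / α)) := by
  obtain ⟨hε1, hε2⟩ := hε
  have hsq : (0:ℝ) < Real.sqrt 2 := by positivity
  set c : ℝ := α / (2 * Real.sqrt 2 * σ * Real.Gamma (1 / α)) with hc
  set a : ℝ := Real.sqrt 2 * (1 + ε) * σ with ha'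
  set b : ℝ := Real.sqrt 2 * (1 - ε) * σ with hb'
  have ha : 0 < a := mul_pos (mul_pos hsq (by linarith)) hσ
  have hb : 0 < b := mul_pos (mul_pos hsq (by linarith)) hσ
  set g : ℝ → ℝ := fun y => y ^ r *
    (if y < 0 then c * Real.exp (-((-y / a) ^ α)) else c * Real.exp (-((y / b) ^ α))) with hg
  have hgx : ∀ x : ℝ, (x - θ) ^ r * esepPDF θ σ ε α x = g (x - θ) := by
    intro x
    rw [hg]
    simp only [esepPDF]
    by_cases h : x < θ
    · rw [if_pos h, if_pos (by linarith : x - θ < 0)]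
      have : θ - x = -(x - θ) := by ring
      rw [this]
    · rw [if_neg h, if_neg (by simp at h ⊢; linarith : ¬ x - θ < 0)]
  -- the reflected function agrees with an integrable one on Ioi 0
  have hgneg : ∀ y ∈ Ioi (0:ℝ), c * (y ^ r * Real.exp (-((y / a) ^ α))) = g (-y) := by
    intro y hy
    rw [hg]
    simp only
    rw [if_pos (by simp at hy ⊢; linarith : -y < 0), neg_neg, hre.neg_pow]
    ring
  have hgpos : ∀ y ∈ Ioi (0:ℝ), c * (y ^ r * Real.exp (-((y / b) ^ α))) = g y := by
    intro y hy
    rw [hg]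
    simp only
    rw [if_neg (by simp at hy ⊢; linarith : ¬ y < 0)]
    ring
  have hIR : IntegrableOn g (Ioi 0) :=
    IntegrableOn.congr_fun ((esep_aux_integrable' hα hb r).const_mul c) hgpos measurableSet_Ioi
  have hIL : IntegrableOn g (Iic 0) := by
    have h1 : IntegrableOn (fun y => g (-y)) (Ioi 0) :=
      IntegrableOn.congr_fun ((esep_aux_integrable' hα ha r).const_mul c) hgneg measurableSet_Ioi
    have h2 : IntegrableOn (fun y => g (-y)) (Ici 0) :=
      (integrableOn_Ici_iff_integrableOn_Ioi (by simp)).2 h1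
    have hpre : (fun x : ℝ => -x) ⁻¹' (Iic 0) = Ici 0 := by ext x; simp
    have := (MeasurePreserving.integrableOn_comp_preimage
      (Measure.measurePreserving_neg (volume : Measure ℝ))
      (Homeomorph.neg ℝ).measurableEmbedding (s := Iic (0:ℝ)) (f := g)).1
    rw [hpre] at this
    exact this h2
  have hsplit : ∫ y : ℝ, g y = (∫ y in Iic (0:ℝ), g y) + ∫ y in Ioi (0:ℝ), g y :=
    (intervalIntegral.integral_Iic_add_Ioi hIL hIR).symm
  have hleft : ∫ y in Iic (0:ℝ), g y = c * (a ^ (r + 1) * ((1 / α) * Real.Gamma (((r:ℝ) + 1) / α))) := by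
    have h0 : ∫ y in Ioi (0:ℝ), g (-y) = ∫ y in Iic (0:ℝ), g y := by
      have := integral_comp_neg_Ioi (0:ℝ) g
      rwa [neg_zero] at this
    rw [← h0, ← setIntegral_congr_fun measurableSet_Ioi hgneg, integral_const_mul,
      esep_aux_integral hα ha r]
  have hright : ∫ y in Ioi (0:ℝ), g y = c * (b ^ (r + 1) * ((1 / α) * Real.Gamma (((r:ℝ) + 1) / α))) := by
    rw [← setIntegral_congr_fun measurableSet_Ioi hgpos, integral_const_mul,
      esep_aux_integral hα hb r]
  have hmain : ∫ x : ℝ, (x - θ) ^ r * esepPDF θ σ ε α x =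
      c * (a ^ (r + 1) * ((1 / α) * Real.Gamma (((r:ℝ) + 1) / α))) +
      c * (b ^ (r + 1) * ((1 / α) * Real.Gamma (((r:ℝ) + 1) / α))) := by
    calc ∫ x : ℝ, (x - θ) ^ r * esepPDF θ σ ε α x = ∫ x : ℝ, g (x - θ) := by
          simp_rw [hgx]
      _ = ∫ y : ℝ, g y := integral_sub_right_eq_self g θ
      _ = _ := by rw [hsplit, hleft, hright]
  rw [hmain]
  have hΓ : 0 < Real.Gamma (1 / α) := Real.Gamma_pos_of_pos (by positivity)
  have h2r : (2:ℝ) ^ ((r:ℝ) / 2) = (Real.sqrt 2) ^ r := by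
    rw [show Real.sqrt 2 = (2:ℝ) ^ ((1:ℝ)/2) from Real.sqrt_eq_rpow 2,
      ← Real.rpow_natCast ((2:ℝ) ^ ((1:ℝ)/2)) r, ← Real.rpow_mul (by norm_num)]
    congr 1
    ring
  rw [h2r, hc, ha', hb']
  simp only [mul_pow]
  field_simp
  ring
end

section
/- The ESt location score function ψ_θ(x) = (ν+1)x / (ν(1−sign(x)ε)² + x²) satisfies lim_{x→±∞} ψ_θ(x) = 0, the scale score ψ_σ(x) = (ν+1)x²/(ν(1−sign(x)ε)² + x²) − 1 satisfies lim_{x→±∞} ψ_σ(x) = ν, and the skewness score ψ_ε(x) = (ν+1)x² sign(x)/(ν(1−sign(x)ε)³ + (1−sign(x)ε)x²) satisfies lim_{x→+∞} ψ_ε(x) = (ν+1)/(1−ε). In particular all three are bounded on ℝ. -/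
open Real Filter Topology

/-- sign(x) = 1 for x ≥ 0, -1 for x < 0. -/
noncomputable def sgn (x : ℝ) : ℝ := if x < 0 then -1 else 1

/-- ESt location score. -/
noncomputable def estPsiTheta (ν ε : ℝ) (x : ℝ) : ℝ :=
  (ν + 1) * x / (ν * (1 - sgn x * ε) ^ 2 + x ^ 2)

/-- ESt scale score. -/
noncomputable def estPsiSigma (ν ε : ℝ) (x : ℝ) : ℝ :=
  (ν + 1) * x ^ 2 / (ν * (1 - sgn x * ε) ^ 2 + x ^ 2) - 1

/-- ESt skewness score. -/
noncomputable def estPsiEps (ν ε : ℝ) (x : ℝ) : ℝ :=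
  (ν + 1) * x ^ 2 * sgn x / (ν * (1 - sgn x * ε) ^ 3 + (1 - sgn x * ε) * x ^ 2)

private lemma estKey {l : Filter ℝ} (h1 : Tendsto (fun x : ℝ => x⁻¹) l (𝓝 0))
    (hne : ∀ᶠ x : ℝ in l, x ≠ 0) (c A : ℝ) (hc : 0 < c) :
    Tendsto (fun x : ℝ => A * x / (c + x ^ 2)) l (𝓝 0) ∧
    Tendsto (fun x : ℝ => A * x ^ 2 / (c + x ^ 2)) l (𝓝 A) := by
  have hd : ∀ x : ℝ, 0 < c + x ^ 2 := fun x => by positivity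
  have h2 : Tendsto (fun x : ℝ => c * (x⁻¹ * x⁻¹) + 1) l (𝓝 1) := by
    have := (((h1.mul h1).const_mul c).add (tendsto_const_nhds (x := (1 : ℝ))))
    simpa using this
  have hfrac : Tendsto (fun x : ℝ => x ^ 2 / (c + x ^ 2)) l (𝓝 1) := by
    have h3 := h2.inv₀ one_ne_zero
    rw [inv_one] at h3
    refine h3.congr' ?_
    filter_upwards [hne] with x hx
    have hx2 : x ^ 2 ≠ 0 := pow_ne_zero 2 hx
    have h6 : c * (x⁻¹ * x⁻¹) + 1 = (c + x ^ 2) / x ^ 2 := by field_simp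
    rw [h6, inv_div]
  constructor
  · have h4 := (h1.const_mul A).mul hfrac
    rw [mul_zero, zero_mul] at h4
    refine h4.congr' ?_
    filter_upwards [hne] with x hx
    field_simp
  · have h5 := hfrac.const_mul A
    rw [mul_one] at h5
    simpa [mul_div_assoc] using h5

private lemma bTheta (A c x : ℝ) (hA : 0 ≤ A) (hc : 0 < c) :
    |A * x / (c + x ^ 2)| ≤ A / (2 * Real.sqrt c) := by
  have hd : 0 < c + x ^ 2 := by positivity
  have hs : 0 < Real.sqrt c := Real.sqrt_pos.mpr hc
  rw [abs_div, abs_of_pos hd, div_le_div_iff₀ hd (by positivity)]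
  have h2 : 2 * Real.sqrt c * |x| ≤ c + x ^ 2 := by
    have := two_mul_le_add_sq (Real.sqrt c) |x|
    simpa [Real.sq_sqrt hc.le, sq_abs] using this
  have hax : |A * x| = A * |x| := by rw [abs_mul, abs_of_nonneg hA]
  rw [hax]
  nlinarith [abs_nonneg x, hs.le]

private lemma bSigma (A c x : ℝ) (hA : 0 ≤ A) (hc : 0 < c) :
    |A * x ^ 2 / (c + x ^ 2) - 1| ≤ A + 1 := by
  have hd : 0 < c + x ^ 2 := by positivity
  have h0 : 0 ≤ A * x ^ 2 / (c + x ^ 2) := by positivity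
  have h1 : A * x ^ 2 / (c + x ^ 2) ≤ A := by
    rw [div_le_iff₀ hd]; nlinarith
  rw [abs_le]; constructor <;> nlinarith

private lemma bEps' (A a c x : ℝ) (hA : 0 ≤ A) (ha : 0 < a) (hc : 0 < c) :
    |A * x ^ 2 / (a * (c + x ^ 2))| ≤ A / a := by
  have hd : 0 < c + x ^ 2 := by positivity
  rw [abs_of_nonneg (by positivity), div_le_div_iff₀ (by positivity) ha]
  nlinarith [mul_nonneg (mul_nonneg hA ha.le) hc.le]

theorem est_scores_bounded (ν ε : ℝ) (hν : 0 < ν) (hε : ε ∈ Set.Ioo (-1 : ℝ) 1) :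
    Tendsto (estPsiTheta ν ε) atTop (𝓝 0) ∧
    Tendsto (estPsiTheta ν ε) atBot (𝓝 0) ∧
    Tendsto (estPsiSigma ν ε) atTop (𝓝 ν) ∧
    Tendsto (estPsiSigma ν ε) atBot (𝓝 ν) ∧
    Tendsto (estPsiEps ν ε) atTop (𝓝 ((ν + 1) / (1 - ε))) ∧
    (∃ M : ℝ, ∀ x : ℝ,
      |estPsiTheta ν ε x| ≤ M ∧ |estPsiSigma ν ε x| ≤ M ∧ |estPsiEps ν ε x| ≤ M) := by
  obtain ⟨hε1, hε2⟩ := hε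
  have hm : 0 < 1 - ε := by linarith
  have hp : 0 < 1 + ε := by linarith
  have hc₁ : 0 < ν * (1 - ε) ^ 2 := by positivity
  have hc₂ : 0 < ν * (1 + ε) ^ 2 := by positivity
  have hA : 0 ≤ ν + 1 := by linarith
  have hneT : ∀ᶠ x : ℝ in atTop, x ≠ 0 :=
    (eventually_gt_atTop 0).mono fun x h => ne_of_gt h
  have hneB : ∀ᶠ x : ℝ in atBot, x ≠ 0 :=
    (eventually_lt_atBot 0).mono fun x h => ne_of_lt h
  have hsgnT : ∀ᶠ x : ℝ in atTop, sgn x = 1 :=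
    (eventually_ge_atTop 0).mono fun x h => by simp [sgn, not_lt.mpr h]
  have hsgnB : ∀ᶠ x : ℝ in atBot, sgn x = -1 :=
    (eventually_lt_atBot 0).mono fun x h => by simp [sgn, h]
  have keyT := estKey tendsto_inv_atTop_zero hneT (ν * (1 - ε) ^ 2) (ν + 1) hc₁
  have h1B : Tendsto (fun x : ℝ => x⁻¹) atBot (𝓝 0) := by
    have := ((tendsto_inv_atTop_zero (𝕜 := ℝ)).comp (tendsto_neg_atBot_atTop (G := ℝ))).neg
    simpa [Function.comp, inv_neg] using this
  have keyB := estKey h1B hneB (ν * (1 + ε) ^ 2) (ν + 1) hc₂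
  refine ⟨?_, ?_, ?_, ?_, ?_, ?_⟩
  · refine keyT.1.congr' ?_
    filter_upwards [hsgnT] with x hx
    simp [estPsiTheta, hx]
  · refine keyB.1.congr' ?_
    filter_upwards [hsgnB] with x hx
    simp [estPsiTheta, hx]
  · have h := keyT.2.sub_const 1
    have hv : ν + 1 - 1 = ν := by ring
    rw [hv] at h
    refine h.congr' ?_
    filter_upwards [hsgnT] with x hx
    simp [estPsiSigma, hx]
  · have h := keyB.2.sub_const 1
    have hv : ν + 1 - 1 = ν := by ring
    rw [hv] at h
    refine h.congr' ?_
    filter_upwards [hsgnB] with x hx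
    simp [estPsiSigma, hx]
  · have h := (estKey tendsto_inv_atTop_zero hneT (ν * (1 - ε) ^ 2) ((ν + 1) / (1 - ε)) hc₁).2
    refine h.congr' ?_
    filter_upwards [hsgnT] with x hx
    have hd : (0 : ℝ) < ν * (1 - ε) ^ 2 + x ^ 2 := by positivity
    simp only [estPsiEps, hx, one_mul, mul_one]
    rw [show ν * (1 - ε) ^ 3 + (1 - ε) * x ^ 2 = (1 - ε) * (ν * (1 - ε) ^ 2 + x ^ 2) by ring]
    field_simp
  · refine ⟨(ν + 1) / (2 * Real.sqrt (ν * (1 - ε) ^ 2)) +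
      (ν + 1) / (2 * Real.sqrt (ν * (1 + ε) ^ 2)) + ((ν + 1) + 1) +
      (ν + 1) / (1 - ε) + (ν + 1) / (1 + ε), fun x => ?_⟩
    have ht1 : 0 ≤ (ν + 1) / (2 * Real.sqrt (ν * (1 - ε) ^ 2)) := by positivity
    have ht2 : 0 ≤ (ν + 1) / (2 * Real.sqrt (ν * (1 + ε) ^ 2)) := by positivity
    have ht3 : (0:ℝ) ≤ (ν + 1) + 1 := by linarith
    have ht4 : 0 ≤ (ν + 1) / (1 - ε) := by positivity
    have ht5 : 0 ≤ (ν + 1) / (1 + ε) := by positivity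
    by_cases hx : x < 0
    · have hs : sgn x = -1 := by simp [sgn, hx]
      refine ⟨?_, ?_, ?_⟩
      · have hb := bTheta (ν + 1) (ν * (1 + ε) ^ 2) x hA hc₂
        have he : estPsiTheta ν ε x = (ν + 1) * x / (ν * (1 + ε) ^ 2 + x ^ 2) := by
          simp [estPsiTheta, hs]
        rw [he]; linarith
      · have hb := bSigma (ν + 1) (ν * (1 + ε) ^ 2) x hA hc₂
        have he : estPsiSigma ν ε x = (ν + 1) * x ^ 2 / (ν * (1 + ε) ^ 2 + x ^ 2) - 1 := by
          simp [estPsiSigma, hs]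
        rw [he]; linarith
      · have hb := bEps' (ν + 1) (1 + ε) (ν * (1 + ε) ^ 2) x hA hp hc₂
        have he : |estPsiEps ν ε x| = |(ν + 1) * x ^ 2 / ((1 + ε) * (ν * (1 + ε) ^ 2 + x ^ 2))| := by
          rw [show estPsiEps ν ε x
              = -((ν + 1) * x ^ 2 / ((1 + ε) * (ν * (1 + ε) ^ 2 + x ^ 2))) from ?_,
            abs_neg]
          simp only [estPsiEps, hs]
          rw [show ν * (1 - (-1) * ε) ^ 3 + (1 - (-1) * ε) * x ^ 2
              = (1 + ε) * (ν * (1 + ε) ^ 2 + x ^ 2) by ring]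
          ring
        rw [he]; linarith
    · have hs : sgn x = 1 := by simp [sgn, hx]
      refine ⟨?_, ?_, ?_⟩
      · have hb := bTheta (ν + 1) (ν * (1 - ε) ^ 2) x hA hc₁
        have he : estPsiTheta ν ε x = (ν + 1) * x / (ν * (1 - ε) ^ 2 + x ^ 2) := by
          simp [estPsiTheta, hs]
        rw [he]; linarith
      · have hb := bSigma (ν + 1) (ν * (1 - ε) ^ 2) x hA hc₁
        have he : estPsiSigma ν ε x = (ν + 1) * x ^ 2 / (ν * (1 - ε) ^ 2 + x ^ 2) - 1 := by
          simp [estPsiSigma, hs]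
        rw [he]; linarith
      · have hb := bEps' (ν + 1) (1 - ε) (ν * (1 - ε) ^ 2) x hA hm hc₁
        have he : estPsiEps ν ε x = (ν + 1) * x ^ 2 / ((1 - ε) * (ν * (1 - ε) ^ 2 + x ^ 2)) := by
          simp only [estPsiEps, hs, mul_one]
          rw [show ν * (1 - 1 * ε) ^ 3 + (1 - 1 * ε) * x ^ 2
              = (1 - ε) * (ν * (1 - ε) ^ 2 + x ^ 2) by ring]
        rw [he]; linarith
end

section
/- For α > 0 and q > 0, ∫₀^∞ (1+y^α)^{−q−1/α} log(1+y^α) dy = −Γ(1/α)Γ(q)(ψ(q) − ψ(q+1/α)) / (α Γ(q+1/α)), where ψ is the digamma function. -/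
open Real MeasureTheory Set Metric


lemma betaReal_intervalIntegrable {a b : ℝ} (ha : 0 < a) (hb : 0 < b) :
    IntervalIntegrable (fun x => x ^ (a - 1) * (1 - x) ^ (b - 1)) volume 0 1 := by
  have left : ∀ {u v : ℝ}, 0 < u → IntervalIntegrable
      (fun x => x ^ (u - 1) * (1 - x) ^ (v - 1)) volume 0 (1 / 2) := by
    intro u v hu
    apply IntervalIntegrable.mul_continuousOn
    · exact intervalIntegral.intervalIntegrable_rpow' (by linarith)
    · apply ContinuousOn.rpow_const
      · exact (continuous_const.sub continuous_id).continuousOn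
      · intro x hx
        rw [uIcc_of_le (by norm_num : (0:ℝ) ≤ 1/2)] at hx
        left; linarith [hx.2]
  refine (left ha).trans ?_
  rw [IntervalIntegrable.iff_comp_neg]
  convert ((left (v := a) hb).comp_add_right 1).symm using 1
  · ext x
    ring_nf
  · norm_num
  · norm_num

lemma betaReal_eq {a b : ℝ} (ha : 0 < a) (hb : 0 < b) :
    ∫ x in (0:ℝ)..1, x ^ (a - 1) * (1 - x) ^ (b - 1) =
      Real.Gamma a * Real.Gamma b / Real.Gamma (a + b) := by
  have h := Complex.Gamma_mul_Gamma_eq_betaIntegral (s := a) (t := b)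
      (by simpa using ha) (by simpa using hb)
  have hcoe : Complex.betaIntegral a b =
      ((∫ x in (0:ℝ)..1, x ^ (a - 1) * (1 - x) ^ (b - 1) : ℝ) : ℂ) := by
    rw [Complex.betaIntegral, ← intervalIntegral.integral_ofReal]
    refine intervalIntegral.integral_congr fun x hx => ?_
    rw [Set.uIcc_of_le zero_le_one] at hx
    rw [(by push_cast; ring : ((a:ℂ) - 1) = ((a - 1 : ℝ) : ℂ)),
      (by push_cast; ring : (1 - (x:ℂ)) = ((1 - x : ℝ) : ℂ)),
      (by push_cast; ring : ((b:ℂ) - 1) = ((b - 1 : ℝ) : ℂ)),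
      ← Complex.ofReal_cpow hx.1, ← Complex.ofReal_cpow (by linarith [hx.2]),
      ← Complex.ofReal_mul]
  rw [hcoe, ← Complex.ofReal_add, Complex.Gamma_ofReal, Complex.Gamma_ofReal,
    Complex.Gamma_ofReal, ← Complex.ofReal_mul, ← Complex.ofReal_mul] at h
  have := Complex.ofReal_inj.1 h
  have hG : Real.Gamma (a + b) ≠ 0 := (Real.Gamma_pos_of_pos (by linarith)).ne'
  field_simp
  linarith [this]

lemma subst_lemma {α : ℝ} (hα : 0 < α) (q : ℝ) :
    ∫ y in Set.Ioi (0:ℝ), (1 + y ^ α) ^ (-q - 1/α) * Real.log (1 + y ^ α) =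
      ∫ x in Set.Ioo (0:ℝ) 1,
        -((1/α) * (Real.log x * (x ^ (q - 1) * (1 - x) ^ (1/α - 1)))) := by
  set c : ℝ := 1/α with hc_def
  have hc : 0 < c := by positivity
  have key : ∀ z : ℝ, 0 ≤ z → (z ^ c) ^ α = z := by
    intro z hz
    rw [← Real.rpow_mul hz, hc_def, one_div_mul_cancel hα.ne', Real.rpow_one]
  have key2 : ∀ z : ℝ, 0 ≤ z → (z ^ α) ^ c = z := by
    intro z hz
    rw [← Real.rpow_mul hz, hc_def, mul_one_div_cancel hα.ne', Real.rpow_one]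
  set h : ℝ → ℝ := fun x => ((1 - x)/x) ^ c with hh
  set h' : ℝ → ℝ := fun x => c * ((1 - x)/x) ^ (c - 1) * (-(x^2)⁻¹) with hh'
  have hu : ∀ x ∈ Set.Ioo (0:ℝ) 1, 0 < (1 - x)/x := fun x hx =>
    div_pos (by linarith [hx.2]) hx.1
  have hderiv : ∀ x ∈ Set.Ioo (0:ℝ) 1, HasDerivWithinAt h (h' x) (Set.Ioo 0 1) x := by
    intro x hx
    have hx0 : x ≠ 0 := hx.1.ne'
    have hu' : HasDerivAt (fun x : ℝ => (1 - x)/x) (-(x^2)⁻¹) x := by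
      have h2 : HasDerivAt (fun x : ℝ => x⁻¹ - 1) (-(x^2)⁻¹) x :=
        (hasDerivAt_inv hx0).sub_const 1
      refine h2.congr_of_eventuallyEq ?_
      filter_upwards [eventually_ne_nhds hx0] with y hy
      field_simp
    have h3 := (hu'.rpow_const (p := c) (Or.inl (hu x hx).ne')).hasDerivWithinAt
      (s := Set.Ioo (0:ℝ) 1)
    exact h3.congr_deriv (by rw [hh']; ring)
  have hinj : Set.InjOn h (Set.Ioo 0 1) := by
    intro x hx y hy hxy
    have e : (1 - x)/x = (1 - y)/y := by
      have := congrArg (fun z => z ^ α) hxy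
      simpa only [hh, key _ (hu x hx).le, key _ (hu y hy).le] using this
    have hx0 : x ≠ 0 := hx.1.ne'
    have hy0 : y ≠ 0 := hy.1.ne'
    field_simp at e
    nlinarith [e]
  have himg : h '' Set.Ioo 0 1 = Set.Ioi 0 := by
    apply Set.eq_of_subset_of_subset
    · rintro _ ⟨x, hx, rfl⟩
      exact rpow_pos_of_pos (hu x hx) c
    · intro y hy
      have hy' : (0:ℝ) < y := hy
      have hya : 0 < y ^ α := rpow_pos_of_pos hy' α
      refine ⟨(1 + y ^ α)⁻¹, ⟨by positivity, ?_⟩, ?_⟩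
      · rw [inv_lt_one_iff₀]; right; linarith
      · show ((1 - (1 + y ^ α)⁻¹) / (1 + y ^ α)⁻¹) ^ c = y
        have h1 : (1 - (1 + y ^ α)⁻¹) / (1 + y ^ α)⁻¹ = y ^ α := by
          have : (0:ℝ) < 1 + y ^ α := by linarith
          field_simp
          ring
        rw [h1, key2 y hy'.le]
  rw [← himg, integral_image_eq_integral_abs_deriv_smul measurableSet_Ioo hderiv hinj]
  refine setIntegral_congr_fun measurableSet_Ioo fun x hx => ?_
  have hx0 : 0 < x := hx.1
  have hx1 : x < 1 := hx.2
  have hux := hu x hx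
  have hhx : 1 + (h x) ^ α = x⁻¹ := by
    show 1 + (((1 - x)/x) ^ c) ^ α = x⁻¹
    rw [key _ hux.le]
    field_simp
    ring
  rw [smul_eq_mul, hhx]
  have hxinv : (x⁻¹ : ℝ) ^ (-q - c) = x ^ (q + c) := by
    rw [← Real.rpow_neg_one x, ← Real.rpow_mul hx0.le]
    ring_nf
  rw [hxinv, Real.log_inv]
  have habs : |h' x| = c * ((1 - x)/x) ^ (c - 1) * (x^2)⁻¹ := by
    rw [hh']
    rw [abs_of_nonpos (by
      have : (0:ℝ) ≤ c * ((1 - x)/x) ^ (c - 1) := by positivity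
      have h2 : (0:ℝ) ≤ (x^2)⁻¹ := by positivity
      nlinarith)]
    ring
  rw [habs]
  have hdiv : ((1 - x)/x) ^ (c - 1) = (1 - x) ^ (c - 1) * (x ^ (c-1))⁻¹ := by
    rw [Real.div_rpow (by linarith) hx0.le, div_eq_mul_inv]
  rw [hdiv]
  have hxne : ∀ t : ℝ, x ^ t ≠ 0 := fun t => (rpow_pos_of_pos hx0 t).ne'
  have hcollect : (x ^ (c-1))⁻¹ * (x^2)⁻¹ * x ^ (q + c) = x ^ (q - 1) := by
    rw [← Real.rpow_natCast x 2, ← Real.rpow_neg hx0.le, ← Real.rpow_neg hx0.le,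
      ← Real.rpow_add hx0, ← Real.rpow_add hx0]
    norm_num
    ring_nf
  calc c * ((1 - x) ^ (c - 1) * (x ^ (c-1))⁻¹) * (x^2)⁻¹ * (x ^ (q + c) * -Real.log x)
      = -(c * (Real.log x * (((x ^ (c-1))⁻¹ * (x^2)⁻¹ * x ^ (q + c)) * (1 - x) ^ (c - 1)))) := by
        ring
    _ = -(c * (Real.log x * (x ^ (q - 1) * (1 - x) ^ (c - 1)))) := by rw [hcollect]
lemma beta_hasDerivAt {c q : ℝ} (hc : 0 < c) (hq : 0 < q) :
    Integrable (fun x => Real.log x * (x ^ (q - 1) * (1 - x) ^ (c - 1)))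
      (volume.restrict (Set.Ioo (0:ℝ) 1)) ∧
    HasDerivAt (fun s => ∫ x in Set.Ioo (0:ℝ) 1, x ^ (s - 1) * (1 - x) ^ (c - 1))
      (∫ x in Set.Ioo (0:ℝ) 1, Real.log x * (x ^ (q - 1) * (1 - x) ^ (c - 1))) q := by
  have hbint : ∀ a : ℝ, 0 < a → Integrable (fun x => x ^ (a - 1) * (1 - x) ^ (c - 1))
      (volume.restrict (Set.Ioo (0:ℝ) 1)) := by
    intro a ha
    have := (betaReal_intervalIntegrable ha hc).1
    exact this.mono_set Set.Ioo_subset_Ioc_self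
  have hmeas : ∀ s : ℝ, AEStronglyMeasurable (fun x : ℝ => x ^ (s - 1) * (1 - x) ^ (c - 1))
      (volume.restrict (Set.Ioo (0:ℝ) 1)) := by
    intro s
    apply Measurable.aestronglyMeasurable
    fun_prop
  have hmeas' : AEStronglyMeasurable
      (fun x : ℝ => Real.log x * (x ^ (q - 1) * (1 - x) ^ (c - 1)))
      (volume.restrict (Set.Ioo (0:ℝ) 1)) := by
    apply Measurable.aestronglyMeasurable
    exact Real.measurable_log.mul (by fun_prop)
  have hε : (0:ℝ) < q/2 := by linarith
  have hbound : Integrable (fun x : ℝ => (4/q) * (x ^ (q/4 - 1) * (1 - x) ^ (c - 1)))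
      (volume.restrict (Set.Ioo (0:ℝ) 1)) := (hbint (q/4) (by linarith)).const_mul _
  have key := hasDerivAt_integral_of_dominated_loc_of_deriv_le (μ := volume.restrict (Set.Ioo (0:ℝ) 1))
    (F := fun s x => x ^ (s - 1) * (1 - x) ^ (c - 1))
    (F' := fun s x => Real.log x * (x ^ (s - 1) * (1 - x) ^ (c - 1)))
    (x₀ := q) (bound := fun x => (4/q) * (x ^ (q/4 - 1) * (1 - x) ^ (c - 1)))
    (ball_mem_nhds q hε) (Filter.Eventually.of_forall hmeas) (hbint q hq) hmeas' ?_ hbound ?_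
  · exact key
  · rw [ae_restrict_iff' measurableSet_Ioo]
    refine Filter.Eventually.of_forall fun x hx => fun s hs => ?_
    have hx0 : 0 < x := hx.1
    have hx1 : x < 1 := hx.2
    have hs2 : q/2 < s := by
      have := abs_lt.1 (mem_ball_iff_norm.1 hs); linarith [this.1]
    have h1x : (0:ℝ) ≤ (1 - x) ^ (c - 1) := rpow_nonneg (by linarith) _
    rw [Real.norm_eq_abs, abs_mul, abs_mul, abs_of_nonneg (rpow_nonneg hx0.le _),
      abs_of_nonneg h1x, ← mul_assoc]
    have hlog : |Real.log x| ≤ (4/q) * x ^ (-(q/4)) := by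
      rw [abs_of_nonpos (Real.log_nonpos hx0.le hx1.le)]
      have h2 := Real.log_le_sub_one_of_pos (Real.rpow_pos_of_pos hx0 (-(q/4)))
      rw [Real.log_rpow hx0] at h2
      have h4 : q/4 * (-Real.log x) ≤ x ^ (-(q/4)) := by
        have hxp : (0:ℝ) < x ^ (-(q/4)) := Real.rpow_pos_of_pos hx0 _
        nlinarith [h2]
      calc -Real.log x = (4/q) * (q/4 * (-Real.log x)) := by field_simp
        _ ≤ (4/q) * x ^ (-(q/4)) :=
            mul_le_mul_of_nonneg_left h4 (by positivity)
    have hpow : x ^ (s - 1) ≤ x ^ (q/2 - 1) :=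
      Real.rpow_le_rpow_of_exponent_ge hx0 hx1.le (by linarith)
    calc |Real.log x| * x ^ (s - 1) * (1 - x) ^ (c - 1)
        ≤ ((4/q) * x ^ (-(q/4))) * x ^ (q/2 - 1) * (1 - x) ^ (c - 1) := by
          apply mul_le_mul_of_nonneg_right _ h1x
          apply mul_le_mul hlog hpow (rpow_nonneg hx0.le _)
          positivity
      _ = (4/q) * (x ^ (q/4 - 1) * (1 - x) ^ (c - 1)) := by
          rw [mul_assoc (4/q), ← Real.rpow_add hx0]
          ring_nf
  · rw [ae_restrict_iff' measurableSet_Ioo]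
    refine Filter.Eventually.of_forall fun x hx => fun s _ => ?_
    have hx0 : 0 < x := hx.1
    have hrw : ∀ t : ℝ, x ^ (t - 1) = Real.exp (Real.log x * (t - 1)) := fun t =>
      Real.rpow_def_of_pos hx0 _
    have hd : HasDerivAt (fun s : ℝ => x ^ (s - 1)) (Real.log x * x ^ (s - 1)) s := by
      have h2 : HasDerivAt (fun s : ℝ => Real.log x * (s - 1)) (Real.log x) s := by
        simpa using ((hasDerivAt_id s).sub_const 1).const_mul (Real.log x)
      have h3 := h2.exp
      simp_rw [← hrw] at h3
      convert h3 using 1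
      rw [hrw]; ring
    have := hd.mul_const ((1 - x) ^ (c - 1))
    exact this.congr_deriv (by ring)

/-- The digamma function Γ'/Γ. -/
noncomputable def digamma (x : ℝ) : ℝ := deriv Real.Gamma x / Real.Gamma x

theorem log_beta_type_integral (α q : ℝ) (hα : 0 < α) (hq : 0 < q) :
    ∫ y in Set.Ioi (0 : ℝ), (1 + y ^ α) ^ (-q - 1 / α) * Real.log (1 + y ^ α) =
      -(Real.Gamma (1 / α) * Real.Gamma q * (digamma q - digamma (q + 1 / α))) /
        (α * Real.Gamma (q + 1 / α)) := by
  have hc : (0:ℝ) < 1/α := by positivity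
  set c : ℝ := 1/α with hc_def
  obtain ⟨hint, hder⟩ := beta_hasDerivAt hc hq
  set D : ℝ := ∫ x in Set.Ioo (0:ℝ) 1, Real.log x * (x ^ (q - 1) * (1 - x) ^ (c - 1))
    with hD_def
  have hEq : (fun s => ∫ x in Set.Ioo (0:ℝ) 1, x ^ (s - 1) * (1 - x) ^ (c - 1)) =ᶠ[nhds q]
      (fun s => Real.Gamma s * Real.Gamma c / Real.Gamma (s + c)) := by
    filter_upwards [eventually_gt_nhds hq] with s hs
    rw [← betaReal_eq hs hc, intervalIntegral.integral_of_le zero_le_one,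
      MeasureTheory.integral_Ioc_eq_integral_Ioo]
  have hderR : HasDerivAt (fun s => Real.Gamma s * Real.Gamma c / Real.Gamma (s + c)) D q :=
    hder.congr_of_eventuallyEq hEq.symm
  have hGne : ∀ t : ℝ, 0 < t → ∀ m : ℕ, t ≠ -(m:ℝ) := by
    intro t ht m
    have : -(m:ℝ) ≤ 0 := neg_nonpos.2 (Nat.cast_nonneg m)
    exact ne_of_gt (lt_of_le_of_lt this ht)
  have hG1 : HasDerivAt Real.Gamma (deriv Real.Gamma q) q :=
    (Real.differentiableAt_Gamma (hGne q hq)).hasDerivAt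
  have hqc : (0:ℝ) < q + c := by linarith
  have hG2 : HasDerivAt Real.Gamma (deriv Real.Gamma (q + c)) (q + c) :=
    (Real.differentiableAt_Gamma (hGne _ hqc)).hasDerivAt
  have hcomp : HasDerivAt (fun s : ℝ => Real.Gamma (s + c)) (deriv Real.Gamma (q + c)) q := by
    simpa [Function.comp_def] using hG2.comp q ((hasDerivAt_id q).add_const c)
  have hne : Real.Gamma (q + c) ≠ 0 := (Real.Gamma_pos_of_pos hqc).ne'
  have hqne : Real.Gamma q ≠ 0 := (Real.Gamma_pos_of_pos hq).ne'
  have hR' : HasDerivAt (fun s => Real.Gamma s * Real.Gamma c / Real.Gamma (s + c))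
      ((deriv Real.Gamma q * Real.Gamma c * Real.Gamma (q + c) -
        Real.Gamma q * Real.Gamma c * deriv Real.Gamma (q + c)) / Real.Gamma (q + c) ^ 2) q := by
    have := (hG1.mul_const (Real.Gamma c)).div hcomp hne
    exact this
  have hD : D = (deriv Real.Gamma q * Real.Gamma c * Real.Gamma (q + c) -
      Real.Gamma q * Real.Gamma c * deriv Real.Gamma (q + c)) / Real.Gamma (q + c) ^ 2 :=
    hderR.unique hR'
  rw [subst_lemma hα q]
  rw [MeasureTheory.integral_neg, MeasureTheory.integral_const_mul]
  rw [← hc_def, ← hD_def, hD, digamma, digamma]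
  rw [hc_def]
  have hαne : α ≠ 0 := hα.ne'
  field_simp
end
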